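/- Let q be a real number with 0 < q < 1, and let r ≥ 0 and n ≥ 1 be integers. Then the series below converge, and: if r = 0 then β_n^{(0)} = −n · Σ_{k=0}^{∞} q^k · [k]^{n−1} + (1−q)^{−n}, while if r ≥ 1 then β_n^{(r)} = −n · Σ_{k=0}^{∞} q^{(r+1)·k} · [k]^{n−1} + r·(1−q) · Σ_{k=0}^{∞} q^{r·k} · [k]^n. -/

import Mathlib

set_option maxHeartbeats 1000000


open Finset

/-- The q-bracket: `[x] = (q^x - 1)/(q - 1)`. -/
noncomputable def qb (q x : ℝ) : ℝ := (q ^ x - 1) / (q - 1)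

lemma qb_nat (q : ℝ) (k : ℕ) : qb q (k : ℝ) = (q ^ k - 1) / (q - 1) := by
  unfold qb; rw [Real.rpow_natCast]


lemma sumNegPow (x : ℝ) (n : ℕ) :
    ∑ k ∈ range (n + 1), (-1 : ℝ) ^ (n - k) * (n.choose k : ℝ) * x ^ k = (x - 1) ^ n := by
  have h := add_pow x (-1 : ℝ) n
  rw [show x - 1 = x + (-1) by ring, h]
  exact Finset.sum_congr rfl fun k _ => by ring

lemma sumNegPowMul (x : ℝ) (n : ℕ) (hn : 1 ≤ n) :
    ∑ k ∈ range (n + 1), (-1 : ℝ) ^ (n - k) * (n.choose k : ℝ) * (k : ℝ) * x ^ k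
      = n * x * (x - 1) ^ (n - 1) := by
  obtain ⟨m, rfl⟩ : ∃ m, n = m + 1 := ⟨n - 1, (Nat.succ_pred_eq_of_pos hn).symm⟩
  rw [Finset.sum_range_succ']
  simp only [Nat.cast_zero, mul_zero, zero_mul, pow_zero, mul_one, add_zero]
  have key : ∀ k ∈ range (m + 1),
      (-1 : ℝ) ^ (m + 1 - (k + 1)) * ((m + 1).choose (k + 1) : ℝ) * ((k + 1 : ℕ) : ℝ) * x ^ (k + 1)
        = ((m : ℝ) + 1) * x * ((-1 : ℝ) ^ (m - k) * (m.choose k : ℝ) * x ^ k) := by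
    intro k hk
    have h1 : (m + 1) * m.choose k = (m + 1).choose (k + 1) * (k + 1) := Nat.add_one_mul_choose_eq m k
    have h2 : ((m : ℝ) + 1) * (m.choose k : ℝ) = ((m + 1).choose (k + 1) : ℝ) * ((k : ℝ) + 1) := by
      exact_mod_cast congrArg (Nat.cast : ℕ → ℝ) h1
    have h3 : m + 1 - (k + 1) = m - k := by omega
    rw [h3, pow_succ]
    push_cast
    linear_combination (-((-1 : ℝ) ^ (m - k) * (x ^ k * x))) * h2
  rw [Finset.sum_congr rfl key, ← Finset.mul_sum, sumNegPow]
  push_cast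
  ring_nf

lemma keyj (x : ℝ) (n r : ℕ) (hn : 1 ≤ n) :
    ∑ k ∈ range (n + 1), (-1 : ℝ) ^ (n - k) * (n.choose k : ℝ) * ((k : ℝ) + r) * x ^ k
      = n * x * (x - 1) ^ (n - 1) + r * (x - 1) ^ n := by
  have h1 := sumNegPow x n
  have h2 := sumNegPowMul x n hn
  calc ∑ k ∈ range (n + 1), (-1 : ℝ) ^ (n - k) * (n.choose k : ℝ) * ((k : ℝ) + r) * x ^ k
      = ∑ k ∈ range (n + 1), ((-1 : ℝ) ^ (n - k) * (n.choose k : ℝ) * (k : ℝ) * x ^ k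
          + (r : ℝ) * ((-1 : ℝ) ^ (n - k) * (n.choose k : ℝ) * x ^ k)) :=
        Finset.sum_congr rfl fun k _ => by ring
    _ = n * x * (x - 1) ^ (n - 1) + r * (x - 1) ^ n := by
        rw [Finset.sum_add_distrib, ← Finset.mul_sum, h1, h2]
section
variable {q : ℝ} (hq0 : 0 < q) (hq1 : q < 1)
include hq0 hq1

lemma qb_nonneg (k : ℕ) : 0 ≤ qb q (k : ℝ) := by
  rw [qb_nat]
  have h1 : q ^ k ≤ 1 := pow_le_one₀ hq0.le hq1.le
  have h2 : q - 1 < 0 := by linarith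
  exact div_nonneg_of_nonpos (by linarith) h2.le

lemma qb_le (k : ℕ) : qb q (k : ℝ) ≤ (1 - q)⁻¹ := by
  rw [qb_nat]
  have h0 : (0:ℝ) < 1 - q := by linarith
  have h1 : (0:ℝ) ≤ q ^ k := pow_nonneg hq0.le k
  rw [div_le_iff_of_neg (by linarith : q - 1 < 0)]
  have : (1 - q)⁻¹ * (q - 1) = -1 := by field_simp; ring
  rw [this]; linarith

lemma summable_geo_m (m : ℕ) (hm : 1 ≤ m) : Summable fun j : ℕ => q ^ (m * j) := by
  have h : ∀ j : ℕ, q ^ (m * j) = (q ^ m) ^ j := fun j => by rw [← pow_mul]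
  simp only [h]
  exact summable_geometric_of_lt_one (pow_nonneg hq0.le m) (pow_lt_one₀ hq0.le hq1 (by omega))

lemma tsum_geo_m (m : ℕ) (hm : 1 ≤ m) : ∑' j : ℕ, q ^ (m * j) = (1 - q ^ m)⁻¹ := by
  have h : ∀ j : ℕ, q ^ (m * j) = (q ^ m) ^ j := fun j => by rw [← pow_mul]
  simp only [h]
  exact tsum_geometric_of_lt_one (pow_nonneg hq0.le m) (pow_lt_one₀ hq0.le hq1 (by omega))

lemma summable_main (m e : ℕ) (hm : 1 ≤ m) :
    Summable fun k : ℕ => q ^ (m * k) * (qb q (k : ℝ)) ^ e := by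
  refine Summable.of_nonneg_of_le
    (fun k => mul_nonneg (pow_nonneg hq0.le _) (pow_nonneg (qb_nonneg hq0 hq1 k) e))
    (fun k => ?_) (((summable_geometric_of_lt_one (pow_nonneg hq0.le m)
      (pow_lt_one₀ hq0.le hq1 (by omega))).mul_left (((1 - q)⁻¹) ^ e)))
  have h1 : (qb q (k : ℝ)) ^ e ≤ ((1 - q)⁻¹) ^ e :=
    pow_le_pow_left₀ (qb_nonneg hq0 hq1 k) (qb_le hq0 hq1 k) e
  calc q ^ (m * k) * (qb q (k : ℝ)) ^ e ≤ q ^ (m * k) * ((1 - q)⁻¹) ^ e :=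
        mul_le_mul_of_nonneg_left h1 (pow_nonneg hq0.le _)
    _ = ((1 - q)⁻¹) ^ e * (q ^ m) ^ k := by rw [← pow_mul]; ring

end


/-- The extended Carlitz q-Bernoulli numbers of order `r`, with the convention
`(k+r)/[k+r] = 1` when `k + r = 0`. -/
noncomputable def extBetaNum (q : ℝ) (r n : ℕ) : ℝ :=
  ((q - 1) ^ n)⁻¹ *
    ∑ k ∈ range (n + 1),
      (-1 : ℝ) ^ (n - k) * (n.choose k : ℝ) *
        (if k + r = 0 then 1 else ((k + r : ℕ) : ℝ) / qb q ((k + r : ℕ) : ℝ))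

/-- Core identity, valid for every `r`. -/
lemma core (q : ℝ) (hq0 : 0 < q) (hq1 : q < 1) (r n : ℕ) (hn : 1 ≤ n) :
    extBetaNum q r n
      = (∑' j : ℕ, (-(n : ℝ) * (q ^ ((r + 1) * j) * (qb q (j : ℝ)) ^ (n - 1))
          + (r : ℝ) * (1 - q) * (q ^ (r * j) * (qb q (j : ℝ)) ^ n)))
        + (if r = 0 then ((1 - q) ^ n)⁻¹ else 0) := by
  have hu : q - 1 ≠ 0 := by linarith
  have h1q : (0:ℝ) < 1 - q := by linarith
  set c : ℝ := ((q - 1) ^ n)⁻¹ with hc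
  set g : ℕ → ℕ → ℝ := fun k j =>
    c * ((-1 : ℝ) ^ (n - k) * (n.choose k : ℝ) * ((k : ℝ) + r) * (1 - q) * q ^ ((k + r) * j))
    with hg
  -- summability of each g k
  have hgsum : ∀ k, Summable (g k) := by
    intro k
    rcases Nat.eq_zero_or_pos (k + r) with h | h
    · have : g k = fun _ => 0 := by
        funext j
        have hk0 : (k : ℝ) + r = 0 := by
          have := Nat.add_eq_zero.mp h
          simp [this.1, this.2]
        simp [hg, hk0]
      rw [this]; exact summable_zero
    · exact ((summable_geo_m hq0 hq1 (k + r) h).mul_left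
        (c * ((-1 : ℝ) ^ (n - k) * (n.choose k : ℝ) * ((k : ℝ) + r) * (1 - q)))).congr
        fun j => by simp only [hg]; ring
  -- per-k evaluation
  have hk : ∀ k ∈ range (n + 1),
      c * ((-1 : ℝ) ^ (n - k) * (n.choose k : ℝ) *
        (if k + r = 0 then 1 else ((k + r : ℕ) : ℝ) / qb q ((k + r : ℕ) : ℝ)))
      = (if k + r = 0 then ((1 - q) ^ n)⁻¹ else 0) + ∑' j : ℕ, g k j := by
    intro k _
    rcases Nat.eq_zero_or_pos (k + r) with h | h
    · obtain ⟨hk0, hr0⟩ := Nat.add_eq_zero.mp h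
      subst hk0; subst hr0
      have hgz : ∀ j, g 0 j = 0 := fun j => by simp [hg]
      rw [tsum_congr hgz, tsum_zero, add_zero, hc]
      have h3 : ((1 - q) ^ n)⁻¹ = (-1 : ℝ) ^ n * ((q - 1) ^ n)⁻¹ := by
        rw [show ((1 - q) ^ n) = (-1 : ℝ) ^ n * (q - 1) ^ n by rw [← mul_pow]; ring_nf,
          mul_inv]
        rw [show ((-1 : ℝ) ^ n)⁻¹ = (-1 : ℝ) ^ n by rw [← inv_pow, inv_neg, inv_one]]
      simp only [Nat.sub_zero, Nat.choose_zero_right, Nat.cast_one, if_true, h3]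
      ring
    · have hne : k + r ≠ 0 := by omega
      rw [if_neg hne, if_neg hne, zero_add]
      have htg : ∑' j : ℕ, g k j
          = c * ((-1 : ℝ) ^ (n - k) * (n.choose k : ℝ) * ((k : ℝ) + r) * (1 - q))
            * (1 - q ^ (k + r))⁻¹ := by
        rw [show (fun j => g k j) = fun j =>
            (c * ((-1 : ℝ) ^ (n - k) * (n.choose k : ℝ) * ((k : ℝ) + r) * (1 - q)))
              * q ^ ((k + r) * j) from funext fun j => by rw [hg]; ring,
          tsum_mul_left, tsum_geo_m hq0 hq1 (k + r) h]
      rw [htg]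
      have hqm : q ^ (k + r) ≠ 1 := ne_of_lt (pow_lt_one₀ hq0.le hq1 (by omega))
      rw [qb_nat]
      have hcast : ((k + r : ℕ) : ℝ) = (k : ℝ) + r := by push_cast; ring
      rw [hcast]
      have hd1 : (1 : ℝ) - q ^ (k + r) ≠ 0 := sub_ne_zero.mpr hqm.symm
      have hd2 : q ^ (k + r) - 1 ≠ 0 := sub_ne_zero.mpr hqm
      field_simp
      ring
  -- assemble
  rw [extBetaNum, Finset.mul_sum, Finset.sum_congr rfl hk, Finset.sum_add_distrib]
  have hite : (∑ k ∈ range (n + 1), if k + r = 0 then ((1 - q) ^ n)⁻¹ else 0)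
      = if r = 0 then ((1 - q) ^ n)⁻¹ else 0 := by
    rcases Nat.eq_zero_or_pos r with hr | hr
    · subst hr
      simp only [Nat.add_zero, if_pos rfl]
      rw [Finset.sum_ite_eq' (range (n + 1)) 0 (fun _ => ((1 - q) ^ n)⁻¹)]
      simp
    · have : ∀ k ∈ range (n + 1), (if k + r = 0 then ((1 - q) ^ n)⁻¹ else 0) = 0 :=
        fun k _ => if_neg (by omega)
      rw [Finset.sum_congr rfl this, Finset.sum_const_zero, if_neg (by omega)]
  rw [hite, ← Summable.tsum_finsetSum (fun k _ => hgsum k)]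
  rw [add_comm]
  congr 1
  refine tsum_congr fun j => ?_
  -- per-j identity
  have hx : ∀ k, q ^ ((k + r) * j) = q ^ (r * j) * (q ^ j) ^ k := by
    intro k
    rw [← pow_mul, ← pow_add]
    ring_nf
  obtain ⟨m, rfl⟩ : ∃ m, n = m + 1 := ⟨n - 1, (Nat.succ_pred_eq_of_pos hn).symm⟩
  have hsum : ∑ k ∈ range (m + 1 + 1), g k j
      = c * (1 - q) * q ^ (r * j) *
        (((m + 1 : ℕ) : ℝ) * q ^ j * (q ^ j - 1) ^ (m + 1 - 1) + r * (q ^ j - 1) ^ (m + 1)) := by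
    rw [← keyj (q ^ j) (m + 1) r (by omega), Finset.mul_sum]
    refine Finset.sum_congr rfl fun k _ => ?_
    rw [hg]
    beta_reduce
    rw [hx k]
    push_cast
    ring
  rw [hsum, qb_nat]
  have hrj : q ^ ((r + 1) * j) = q ^ (r * j) * q ^ j := by
    rw [← pow_add]; ring_nf
  rw [hrj, hc]
  simp only [Nat.add_sub_cancel, div_pow]
  push_cast
  field_simp
  ring


theorem extended_beta_series_representation (q : ℝ) (hq0 : 0 < q) (hq1 : q < 1)
    (r n : ℕ) (hn : 1 ≤ n) :
    (Summable fun k : ℕ => q ^ ((r + 1) * k) * (qb q k) ^ (n - 1)) ∧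
    (r = 0 →
      extBetaNum q 0 n
        = -(n : ℝ) * (∑' k : ℕ, q ^ k * (qb q k) ^ (n - 1)) + ((1 - q) ^ n)⁻¹) ∧
    (1 ≤ r →
      (Summable fun k : ℕ => q ^ (r * k) * (qb q k) ^ n) ∧
      extBetaNum q r n
        = -(n : ℝ) * (∑' k : ℕ, q ^ ((r + 1) * k) * (qb q k) ^ (n - 1))
          + (r : ℝ) * (1 - q) * (∑' k : ℕ, q ^ (r * k) * (qb q k) ^ n)) := by

  refine ⟨summable_main hq0 hq1 (r + 1) (n - 1) (by omega), ?_, ?_⟩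
  · rintro rfl
    have hcore := core q hq0 hq1 0 n hn
    rw [if_pos rfl] at hcore
    have hts : (∑' j : ℕ, (-(n : ℝ) * (q ^ ((0 + 1) * j) * (qb q (j : ℝ)) ^ (n - 1))
          + ((0 : ℕ) : ℝ) * (1 - q) * (q ^ (0 * j) * (qb q (j : ℝ)) ^ n)))
        = -(n : ℝ) * ∑' j : ℕ, q ^ j * (qb q (j : ℝ)) ^ (n - 1) := by
      rw [← tsum_mul_left]
      exact tsum_congr fun j => by norm_num
    rw [hcore, hts]
  · intro hr
    refine ⟨summable_main hq0 hq1 r n hr, ?_⟩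
    have hcore := core q hq0 hq1 r n hn
    rw [if_neg (by omega), add_zero] at hcore
    rw [hcore,
      Summable.tsum_add ((summable_main hq0 hq1 (r + 1) (n - 1) (by omega)).mul_left (-(n : ℝ)))
        ((summable_main hq0 hq1 r n hr).mul_left ((r : ℝ) * (1 - q))),
      tsum_mul_left, tsum_mul_left]
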